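/- If τ and τ' are compatible stores and τ decomposes as τ₀ ++ [a := p] ++ τ₁, then the compatible union τ∪τ' decomposes as τ₀' ++ [a := p] ++ τ₁' for some stores τ₀', τ₁' with τ₀ ◁ τ₀' and τ₁ ◁ τ₁'. -/
import Mathlib


abbrev Store (α : Type) := List (ℕ × α)

def Store.dom {α} (τ : Store α) : List ℕ := τ.map Prod.fst

/-- Each variable occurs at most once. -/
def Store.WF {α} (τ : Store α) : Prop := τ.dom.Nodup

/-- Two stores are compatible if every common variable is bound to the same term. -/
def Store.Compat {α} (τ τ' : Store α) : Prop :=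
  ∀ a p q, (a, p) ∈ τ → (a, q) ∈ τ' → p = q

/-- τ' extends τ : dom(τ) ⊆ dom(τ') and the stores are compatible. -/
def Store.Ext {α} (τ τ' : Store α) : Prop :=
  (∀ a, a ∈ τ.dom → a ∈ τ'.dom) ∧ Store.Compat τ τ'

/-- Compatible union: keep τ and append the bindings of τ' on fresh variables. -/
def Store.union {α} (τ τ' : Store α) : Store α :=
  τ ++ τ'.filter (fun b => decide (b.1 ∉ τ.dom))

theorem compatible_union_decomposition {α : Type} (τ τ' τ₀ τ₁ : Store α)
    (hτ : τ.WF) (hτ' : τ'.WF) (h : Store.Compat τ τ')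
    (a : ℕ) (p : α) (hdec : τ = τ₀ ++ [(a, p)] ++ τ₁) :
    ∃ τ₀' τ₁' : Store α,
      Store.union τ τ' = τ₀' ++ [(a, p)] ++ τ₁' ∧
      Store.Ext τ₀ τ₀' ∧ Store.Ext τ₁ τ₁' := by
  have hself : Store.Compat τ τ := by
    intro x u v hu hv
    have := List.inj_on_of_nodup_map hτ hu hv rfl
    exact (Prod.mk.injEq _ _ _ _).mp this |>.2
  have hsub₀ : ∀ b, b ∈ τ₀ → b ∈ τ := by
    intro b hb; rw [hdec]; simp [hb]
  have hsub₁ : ∀ b, b ∈ τ₁ → b ∈ τ := by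
    intro b hb; rw [hdec]; simp [hb]
  refine ⟨τ₀, τ₁ ++ τ'.filter (fun b => decide (b.1 ∉ τ.dom)), ?_, ?_, ?_⟩
  · rw [Store.union, hdec]; simp
  · exact ⟨fun a ha => ha, fun x u v hu hv => hself x u v (hsub₀ _ hu) (hsub₀ _ hv)⟩
  · constructor
    · intro x hx
      simp only [Store.dom, List.map_append, List.mem_append]
      exact Or.inl hx
    · intro x u v hu hv
      rcases List.mem_append.mp hv with hv | hv
      · exact hself x u v (hsub₁ _ hu) (hsub₁ _ hv)
      · exact h x u v (hsub₁ _ hu) (List.mem_of_mem_filter hv)
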